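/- A connected graph G is a partial cube if and only if G is bipartite and the Djoković–Winkler relation Θ on E(G) is transitive (i.e., Θ equals its transitive closure Θ*). -/

import Mathlib

open SimpleGraph
open scoped Classical

/-- The hypercube graph `Q_n`: vertices are 0-1 `n`-tuples, adjacent iff they
differ in exactly one coordinate. -/
def cubeGraph (n : ℕ) : SimpleGraph (Fin n → Bool) where
  Adj x y := ∃! i, x i ≠ y i
  symm := by
    constructor
    rintro x y ⟨i, hi, hu⟩
    exact ⟨i, Ne.symm hi, fun j hj => hu j (Ne.symm hj)⟩
  loopless := by
    constructor
    rintro x ⟨i, hi, -⟩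
    exact hi rfl

/-- A partial cube: a connected graph isometrically embeddable into some hypercube. -/
def IsPartialCube {V : Type*} (G : SimpleGraph V) : Prop :=
  G.Connected ∧ ∃ (n : ℕ) (φ : V → (Fin n → Bool)),
    ∀ u v : V, (cubeGraph n).dist (φ u) (φ v) = G.dist u v

/-- The Djoković–Winkler relation `Θ` on (unordered pairs representing) edges:
`e₁ = u₁v₁` and `e₂ = u₂v₂` are related iff
`d(u₁,u₂) + d(v₁,v₂) ≠ d(u₁,v₂) + d(v₁,u₂)`. -/
def theta {V : Type*} (G : SimpleGraph V) (e f : Sym2 V) : Prop :=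
  ∃ u₁ v₁ u₂ v₂ : V, e = s(u₁, v₁) ∧ f = s(u₂, v₂) ∧
    G.dist u₁ u₂ + G.dist v₁ v₂ ≠ G.dist u₁ v₂ + G.dist v₁ u₂

namespace PCProof

variable {V : Type*}

/-! ### The hypercube: distance is Hamming distance -/

lemma cube_adj_iff {n : ℕ} (x y : Fin n → Bool) :
    (cubeGraph n).Adj x y ↔ hammingDist x y = 1 := by
  constructor
  · rintro ⟨i, hi, hu⟩
    rw [hammingDist, Finset.card_eq_one]
    refine ⟨i, ?_⟩
    ext j
    simp only [Finset.mem_filter, Finset.mem_univ, true_and, Finset.mem_singleton]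
    exact ⟨fun hj => hu j hj, fun hj => hj ▸ hi⟩
  · intro h
    rw [hammingDist, Finset.card_eq_one] at h
    obtain ⟨i, hi⟩ := h
    have hmem : ∀ j, x j ≠ y j ↔ j = i := by
      intro j
      rw [← Finset.mem_singleton, ← hi]
      simp
    exact ⟨i, (hmem i).mpr rfl, fun j hj => (hmem j).mp hj⟩

lemma cube_exists_walk {n : ℕ} : ∀ (k : ℕ) (x y : Fin n → Bool),
    hammingDist x y = k → ∃ p : (cubeGraph n).Walk x y, p.length = k := by
  intro k
  induction k with
  | zero =>
    intro x y h
    rw [hammingDist_eq_zero] at h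
    subst h
    exact ⟨SimpleGraph.Walk.nil, rfl⟩
  | succ k ih =>
    intro x y h
    have hpos : 0 < hammingDist x y := by omega
    rw [hammingDist, Finset.card_pos] at hpos
    obtain ⟨i, hi⟩ := hpos
    simp only [Finset.mem_filter, Finset.mem_univ, true_and] at hi
    set x' := Function.update x i (y i) with hx'
    have hadj : (cubeGraph n).Adj x x' := by
      refine ⟨i, ?_, ?_⟩
      · simp [hx', Function.update_self]
        exact hi
      · intro j hj
        by_contra hne
        exact hj (by rw [hx', Function.update_of_ne hne])
    have hfil : ({j | x' j ≠ y j} : Finset (Fin n)) =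
        ({j | x j ≠ y j} : Finset (Fin n)).erase i := by
      ext j
      by_cases hji : j = i
      · subst hji
        simp [hx', Function.update_self]
      · simp [hx', Function.update_of_ne hji, hji]
    have hham : hammingDist x' y = k := by
      rw [hammingDist, hfil, Finset.card_erase_of_mem (by simpa using hi)]
      rw [hammingDist] at h
      omega
    obtain ⟨q, hq⟩ := ih x' y hham
    exact ⟨SimpleGraph.Walk.cons hadj q, by simp [hq]⟩

lemma cube_walk_le {n : ℕ} {x y : Fin n → Bool} (p : (cubeGraph n).Walk x y) :
    hammingDist x y ≤ p.length := by
  induction p with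
  | nil => simp
  | @cons x' z y' h q ih =>
    calc hammingDist x' y' ≤ hammingDist x' z + hammingDist z y' :=
          hammingDist_triangle _ _ _
    _ ≤ 1 + q.length := by rw [(cube_adj_iff _ _).mp h]; omega
    _ = (SimpleGraph.Walk.cons h q).length := by simp [Nat.add_comm]

lemma cube_dist_eq {n : ℕ} (x y : Fin n → Bool) :
    (cubeGraph n).dist x y = hammingDist x y := by
  obtain ⟨p, hp⟩ := cube_exists_walk (hammingDist x y) x y rfl
  refine le_antisymm (hp ▸ SimpleGraph.dist_le p) ?_
  have hr : (cubeGraph n).Reachable x y := ⟨p⟩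
  obtain ⟨q, hq⟩ := hr.exists_walk_length_eq_dist
  exact hq ▸ cube_walk_le q

/-! ### Bipartite parity facts -/

lemma fin2_eq_of_ne {a b c : Fin 2} (h1 : a ≠ b) (h2 : a ≠ c) : b = c := by
  have := a.isLt; have := b.isLt; have := c.isLt
  have h1' : a.val ≠ b.val := fun h => h1 (Fin.ext h)
  have h2' : a.val ≠ c.val := fun h => h2 (Fin.ext h)
  exact Fin.ext (by omega)

variable {G : SimpleGraph V}

lemma walk_parity (C : G.Coloring (Fin 2)) :
    ∀ {a b : V} (p : G.Walk a b), (C a = C b ↔ Even p.length) := by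
  intro a b p
  induction p with
  | nil => simp
  | @cons a c b h q ih =>
    have hac : C a ≠ C c := C.valid h
    simp only [SimpleGraph.Walk.length_cons, Nat.even_add_one, ← ih]
    constructor
    · intro hab hcb
      exact hac (hab.trans hcb.symm)
    · intro hcb
      exact fin2_eq_of_ne hac.symm hcb

lemma parity_dist (C : G.Coloring (Fin 2)) {a b : V} (h : G.Reachable a b) :
    (C a = C b ↔ Even (G.dist a b)) := by
  obtain ⟨p, hp⟩ := h.exists_walk_length_eq_dist
  rw [← hp]
  exact walk_parity C p

/-- In a connected bipartite graph, distances to the two ends of an edge differ by one. -/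
lemma step_lemma (hcol : G.Colorable 2) (hconn : G.Connected) {u v : V}
    (huv : G.Adj u v) (x : V) :
    G.dist x v = G.dist x u + 1 ∨ G.dist x u = G.dist x v + 1 := by
  obtain ⟨C⟩ := hcol
  have h1 : G.dist x v ≤ G.dist x u + 1 := by
    have := hconn.dist_triangle (u := x) (v := u) (w := v)
    rwa [SimpleGraph.dist_eq_one_iff_adj.mpr huv] at this
  have h2 : G.dist x u ≤ G.dist x v + 1 := by
    have := hconn.dist_triangle (u := x) (v := v) (w := u)
    rwa [SimpleGraph.dist_eq_one_iff_adj.mpr huv.symm] at this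
  have hne : G.dist x u ≠ G.dist x v := by
    intro he
    have pu := parity_dist C (hconn x u)
    have pv := parity_dist C (hconn x v)
    rw [he] at pu
    have : C x = C u ↔ C x = C v := pu.trans pv.symm
    have huv' : C u ≠ C v := C.valid huv
    by_cases hxu : C x = C u
    · exact huv' (hxu.symm.trans (this.mp hxu))
    · exact huv' (fin2_eq_of_ne hxu (fun h => hxu (this.mpr h)))
  omega

/-! ### The `theta` relation via ordered representatives -/

def thetaP (G : SimpleGraph V) (u v a b : V) : Prop :=
  G.dist u a + G.dist v b ≠ G.dist u b + G.dist v a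

lemma theta_iff (u v a b : V) :
    theta G s(u, v) s(a, b) ↔ thetaP G u v a b := by
  constructor
  · rintro ⟨x1, y1, x2, y2, he, hf, h⟩
    rw [Sym2.eq_iff] at he hf
    unfold thetaP
    rcases he with ⟨rfl, rfl⟩ | ⟨rfl, rfl⟩ <;> rcases hf with ⟨rfl, rfl⟩ | ⟨rfl, rfl⟩ <;> omega
  · intro h
    exact ⟨u, v, a, b, rfl, rfl, h⟩

lemma thetaP_symm {u v a b : V} (h : thetaP G u v a b) : thetaP G a b u v := by
  unfold thetaP at *
  rw [SimpleGraph.dist_comm (u := a) (v := u), SimpleGraph.dist_comm (u := b) (v := v),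
    SimpleGraph.dist_comm (u := a) (v := v), SimpleGraph.dist_comm (u := b) (v := u)]
  omega

lemma theta_symm {e f : Sym2 V} (h : theta G e f) : theta G f e := by
  obtain ⟨x1, y1, x2, y2, he, hf, h⟩ := h
  exact ⟨x2, y2, x1, y1, hf, he, by
    rw [SimpleGraph.dist_comm (u := x2) (v := x1), SimpleGraph.dist_comm (u := y2) (v := y1),
      SimpleGraph.dist_comm (u := x2) (v := y1), SimpleGraph.dist_comm (u := y2) (v := x1)]
    omega⟩

lemma thetaP_refl (hconn : G.Connected) {u v : V} (huv : G.Adj u v) : thetaP G u v u v := by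
  unfold thetaP
  rw [SimpleGraph.dist_self, SimpleGraph.dist_self, SimpleGraph.dist_eq_one_iff_adj.mpr huv,
    SimpleGraph.dist_comm (u := v) (v := u), SimpleGraph.dist_eq_one_iff_adj.mpr huv]
  omega

/-- Crossing an edge `ab` flips the side of an edge `uv` iff the edges are Θ-related. -/
lemma flip_lemma (hcol : G.Colorable 2) (hconn : G.Connected) {u v a b : V}
    (huv : G.Adj u v) (hab : G.Adj a b) :
    thetaP G u v a b ↔ ((G.dist a u < G.dist a v) ↔ ¬(G.dist b u < G.dist b v)) := by
  have ha := step_lemma hcol hconn huv a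
  have hb := step_lemma hcol hconn huv b
  unfold thetaP
  rw [SimpleGraph.dist_comm (u := u) (v := a), SimpleGraph.dist_comm (u := v) (v := b),
    SimpleGraph.dist_comm (u := u) (v := b), SimpleGraph.dist_comm (u := v) (v := a)]
  omega

/-! ### Segments of shortest walks -/

lemma exists_walk_segment {x y : V} (p : G.Walk x y) (i : ℕ) :
    ∀ j, i ≤ j → j ≤ p.length →
      ∃ q : G.Walk (p.getVert i) (p.getVert j), q.length = j - i := by
  intro j
  refine Nat.le_induction ?_ ?_ j
  · intro _
    exact ⟨SimpleGraph.Walk.nil, by simp⟩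
  · intro j hij ih hj1
    obtain ⟨q, hq⟩ := ih (by omega)
    have hadj : G.Adj (p.getVert j) (p.getVert (j + 1)) :=
      p.adj_getVert_succ (by omega)
    exact ⟨q.concat hadj, by rw [SimpleGraph.Walk.length_concat]; omega⟩

lemma dist_getVert (hconn : G.Connected) {x y : V} (p : G.Walk x y)
    (hp : p.length = G.dist x y) {i j : ℕ} (hij : i ≤ j) (hj : j ≤ p.length) :
    G.dist (p.getVert i) (p.getVert j) = j - i := by
  obtain ⟨q1, hq1⟩ := exists_walk_segment p 0 i (by omega) (by omega)
  obtain ⟨q2, hq2⟩ := exists_walk_segment p i j hij hj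
  obtain ⟨q3, hq3⟩ := exists_walk_segment p j p.length hj le_rfl
  have d1 : G.dist x (p.getVert i) ≤ i := by
    have h := SimpleGraph.dist_le q1
    simp only [SimpleGraph.Walk.getVert_zero] at h
    omega
  have d2 : G.dist (p.getVert i) (p.getVert j) ≤ j - i := by
    have h := SimpleGraph.dist_le q2; omega
  have d3 : G.dist (p.getVert j) y ≤ p.length - j := by
    have h := SimpleGraph.dist_le q3
    simp only [SimpleGraph.Walk.getVert_length] at h
    omega
  have t1 := hconn.dist_triangle (u := x) (v := p.getVert i) (w := y)
  have t2 := hconn.dist_triangle (u := p.getVert i) (v := p.getVert j) (w := y)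
  omega

/-- Two distinct edges on a common shortest walk are not Θ-related. -/
lemma not_thetaP_on_geodesic (hconn : G.Connected) {x y : V} (p : G.Walk x y)
    (hp : p.length = G.dist x y) {i j : ℕ} (hij : i < j) (hj : j + 1 ≤ p.length) :
    ¬ thetaP G (p.getVert i) (p.getVert (i+1)) (p.getVert j) (p.getVert (j+1)) := by
  have d1 := dist_getVert hconn p hp (i := i) (j := j) (by omega) (by omega)
  have d2 := dist_getVert hconn p hp (i := i+1) (j := j+1) (by omega) (by omega)
  have d3 := dist_getVert hconn p hp (i := i) (j := j+1) (by omega) (by omega)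
  have d4 := dist_getVert hconn p hp (i := i+1) (j := j) (by omega) (by omega)
  unfold thetaP
  omega

/-! ### Forward direction -/

lemma diff_singleton {n : ℕ} {G : SimpleGraph V} {φ : V → Fin n → Bool}
    (hham : ∀ u v : V, hammingDist (φ u) (φ v) = G.dist u v)
    {u v : V} (huv : G.Adj u v) :
    ∃ i : Fin n, ∀ k, φ u k ≠ φ v k ↔ k = i := by
  have h1 : hammingDist (φ u) (φ v) = 1 := by
    rw [hham, SimpleGraph.dist_eq_one_iff_adj]; exact huv
  obtain ⟨i, hi, hu⟩ := (cube_adj_iff (φ u) (φ v)).mpr h1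
  exact ⟨i, fun k => ⟨fun hk => hu k hk, fun hk => hk ▸ hi⟩⟩

lemma key_dichotomy {n : ℕ} {G : SimpleGraph V} (hconn : G.Connected)
    {φ : V → Fin n → Bool}
    (hham : ∀ u v : V, hammingDist (φ u) (φ v) = G.dist u v)
    {u v a b : V} {i j : Fin n}
    (hi : ∀ k, φ u k ≠ φ v k ↔ k = i) (hj : ∀ k, φ a k ≠ φ b k ↔ k = j) :
    thetaP G u v a b ↔ i = j := by
  have hd : ∀ x y : V, G.dist x y = ∑ k : Fin n, if φ x k ≠ φ y k then 1 else 0 := by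
    intro x y
    rw [← hham, hammingDist, Finset.card_filter]
  unfold thetaP
  rw [hd u a, hd v b, hd u b, hd v a, ← Finset.sum_add_distrib, ← Finset.sum_add_distrib]
  have hsplit : ∀ (g : Fin n → ℕ),
      ∑ k, g k = g i + ∑ k ∈ Finset.univ.erase i, g k := by
    intro g
    exact (Finset.add_sum_erase _ g (Finset.mem_univ i)).symm
  rw [hsplit, hsplit (fun k => _)]
  have hrest : ∀ k ∈ Finset.univ.erase i,
      ((if φ u k ≠ φ a k then 1 else 0) + (if φ v k ≠ φ b k then 1 else 0) : ℕ) =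
      (if φ u k ≠ φ b k then 1 else 0) + (if φ v k ≠ φ a k then 1 else 0) := by
    intro k hk
    have hk' : k ≠ i := (Finset.mem_erase.mp hk).1
    have huv : φ u k = φ v k := by
      by_contra hne
      exact hk' ((hi k).mp hne)
    rw [huv]
    exact Nat.add_comm _ _
  rw [Finset.sum_congr rfl hrest]
  have hib : φ u i ≠ φ v i := (hi i).mpr rfl
  constructor
  · intro hne
    by_contra hij
    have hab : φ a i = φ b i := by
      by_contra hne'
      exact hij ((hj i).mp hne')
    rw [hab, Nat.add_comm (if φ u i ≠ φ b i then 1 else 0)] at hne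
    exact hne rfl
  · intro hij
    subst hij
    have hab : φ a i ≠ φ b i := (hj i).mpr rfl
    intro heq
    have : ((if φ u i ≠ φ a i then 1 else 0) + (if φ v i ≠ φ b i then 1 else 0) : ℕ) =
        (if φ u i ≠ φ b i then 1 else 0) + (if φ v i ≠ φ a i then 1 else 0) := by
      omega
    revert this
    cases h1 : φ u i <;> cases h2 : φ v i <;> cases h3 : φ a i <;> cases h4 : φ b i <;>
      simp_all

lemma forward_dir [Fintype V] {G : SimpleGraph V} (hconn : G.Connected)
    (h : IsPartialCube G) :
    G.Colorable 2 ∧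
      ∀ e f g : Sym2 V, e ∈ G.edgeSet → f ∈ G.edgeSet → g ∈ G.edgeSet →
        theta G e f → theta G f g → theta G e g := by
  obtain ⟨-, n, φ, hφ⟩ := h
  have hham : ∀ u v : V, hammingDist (φ u) (φ v) = G.dist u v := by
    intro u v
    rw [← cube_dist_eq, hφ]
  constructor
  · -- 2-colorability
    set f : V → ZMod 2 := fun v => ∑ i, if φ v i then 1 else 0 with hf
    have hvalid : ∀ {u v : V}, G.Adj u v → f u ≠ f v := by
      intro u v huv
      obtain ⟨i₀, hi₀⟩ := diff_singleton hham huv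
      intro heq
      have hsub : f u - f v = ∑ i, ((if φ u i then 1 else 0) - (if φ v i then 1 else 0) : ZMod 2) := by
        rw [hf]
        simp [Finset.sum_sub_distrib]
      have hzero : ∀ j, j ≠ i₀ →
          ((if φ u j then 1 else 0) - (if φ v j then 1 else 0) : ZMod 2) = 0 := by
        intro j hj
        have : φ u j = φ v j := by
          by_contra hne
          exact hj ((hi₀ j).mp hne)
        rw [this]
        exact sub_self _
      have hone : ((if φ u i₀ then 1 else 0) - (if φ v i₀ then 1 else 0) : ZMod 2) = 1 := by
        have hne := (hi₀ i₀).mpr rfl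
        cases h1 : φ u i₀ <;> cases h2 : φ v i₀ <;> simp_all <;> decide
      have : f u - f v = 1 := by
        rw [hsub, Finset.sum_eq_single i₀ (fun j _ hj => hzero j hj) (by simp)]
        exact hone
      rw [heq, sub_self] at this
      exact one_ne_zero this.symm
    have C : G.Coloring (ZMod 2) := SimpleGraph.Coloring.mk f (fun hadj => hvalid hadj)
    have := C.colorable
    rwa [ZMod.card] at this
  · -- transitivity of theta
    intro e f g
    induction e using Sym2.ind with | _ u₁ v₁ =>
    induction f using Sym2.ind with | _ u₂ v₂ =>
    induction g using Sym2.ind with | _ u₃ v₃ =>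
    intro he hf hg hef hfg
    rw [SimpleGraph.mem_edgeSet] at he hf hg
    rw [theta_iff] at hef hfg ⊢
    obtain ⟨i₁, h₁⟩ := diff_singleton hham he
    obtain ⟨i₂, h₂⟩ := diff_singleton hham hf
    obtain ⟨i₃, h₃⟩ := diff_singleton hham hg
    have e12 := (key_dichotomy hconn hham h₁ h₂).mp hef
    have e23 := (key_dichotomy hconn hham h₂ h₃).mp hfg
    exact (key_dichotomy hconn hham h₁ h₃).mpr (e12.trans e23)

/-! ### Backward direction -/

lemma backward_dir [Fintype V] {G : SimpleGraph V} (hconn : G.Connected)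
    (hcol : G.Colorable 2)
    (htrans : ∀ e f g : Sym2 V, e ∈ G.edgeSet → f ∈ G.edgeSet → g ∈ G.edgeSet →
      theta G e f → theta G f g → theta G e g) :
    IsPartialCube G := by
  classical
  have hrefl : ∀ z : Sym2 V, z ∈ G.edgeSet → theta G z z := by
    intro z
    induction z using Sym2.ind with | _ x y =>
    intro hz
    rw [SimpleGraph.mem_edgeSet] at hz
    exact (theta_iff _ _ _ _).mpr (thetaP_refl hconn hz)
  letI sd : Setoid ↥G.edgeSet :=
    ⟨fun e f => theta G e.1 f.1,
      ⟨fun e => hrefl e.1 e.2, fun {e f} h => theta_symm h,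
        fun {e f g} h1 h2 => htrans e.1 f.1 g.1 e.2 f.2 g.2 h1 h2⟩⟩
  haveI : Fintype (Quotient sd) := Fintype.ofFinite _
  set n := Fintype.card (Quotient sd) with hn
  set eqv : Quotient sd ≃ Fin n := Fintype.equivFin _ with heqv
  have aux : ∀ z : Sym2 V, ∃ uv : V × V, z = s(uv.1, uv.2) :=
    Sym2.ind (fun x y => ⟨(x, y), rfl⟩)
  set U : Quotient sd → V := fun c => (Classical.choose (aux (Quotient.out c).1)).1 with hU
  set W : Quotient sd → V := fun c => (Classical.choose (aux (Quotient.out c).1)).2 with hW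
  have hUW : ∀ c, ((Quotient.out c).1 : Sym2 V) = s(U c, W c) := fun c =>
    Classical.choose_spec (aux (Quotient.out c).1)
  have hadjUW : ∀ c, G.Adj (U c) (W c) := by
    intro c
    have h := (Quotient.out c).2
    rw [hUW c, SimpleGraph.mem_edgeSet] at h
    exact h
  set φ : V → Fin n → Bool :=
    fun w i => decide (G.dist w (U (eqv.symm i)) < G.dist w (W (eqv.symm i))) with hφ
  -- a step along an edge flips coordinate `i` iff the edge is Θ-related to the
  -- representative edge of the class indexed by `i`
  have hflipθ : ∀ (a b : V), G.Adj a b → ∀ i : Fin n,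
      (φ a i ≠ φ b i ↔ theta G ((Quotient.out (eqv.symm i)).1) s(a, b)) := by
    intro a b hab i
    have h1 := flip_lemma hcol hconn (hadjUW (eqv.symm i)) hab
    have h2 : (φ a i ≠ φ b i) ↔ thetaP G (U (eqv.symm i)) (W (eqv.symm i)) a b := by
      rw [h1]
      simp only [hφ, Ne, decide_eq_decide]
      tauto
    rw [h2, hUW (eqv.symm i), theta_iff]
  have hclsθ : ∀ (a b : V) (hab : G.Adj a b) (i : Fin n),
      (theta G ((Quotient.out (eqv.symm i)).1) s(a, b) ↔
        i = eqv (Quotient.mk sd ⟨s(a, b), (SimpleGraph.mem_edgeSet G).mpr hab⟩)) := by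
    intro a b hab i
    constructor
    · intro h
      have hq : Quotient.mk sd (Quotient.out (eqv.symm i)) =
          Quotient.mk sd ⟨s(a, b), (SimpleGraph.mem_edgeSet G).mpr hab⟩ :=
        Quotient.sound h
      rw [Quotient.out_eq] at hq
      rw [← hq, Equiv.apply_symm_apply]
    · intro h
      have hq : Quotient.mk sd (Quotient.out (eqv.symm i)) =
          Quotient.mk sd ⟨s(a, b), (SimpleGraph.mem_edgeSet G).mpr hab⟩ := by
        rw [Quotient.out_eq, h, Equiv.symm_apply_apply]
      exact Quotient.exact hq
  -- two edges on a common geodesic are never Θ-related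
  have notheta_path : ∀ (x y : V) (p : G.Walk x y), p.length = G.dist x y →
      ∀ i j : ℕ, i < j → j + 1 ≤ p.length →
        ¬ theta G s(p.getVert i, p.getVert (i+1)) s(p.getVert j, p.getVert (j+1)) := by
    intro x y p hp i j hij hj h
    exact not_thetaP_on_geodesic hconn p hp hij hj ((theta_iff _ _ _ _).mp h)
  -- a coordinate is constant along a geodesic that avoids its Θ-class
  have const_lemma : ∀ (t : ℕ) (x y : V) (p : G.Walk x y) (i : Fin n) (m : ℕ),
      p.length - m = t →
      (∀ j, m ≤ j → j < p.length →
        ¬ theta G ((Quotient.out (eqv.symm i)).1) s(p.getVert j, p.getVert (j+1))) →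
      φ (p.getVert m) i = φ y i := by
    intro t
    induction t with
    | zero =>
      intro x y p i m hm _
      rw [p.getVert_of_length_le (by omega)]
    | succ t ih =>
      intro x y p i m hm hav
      have hmlt : m < p.length := by omega
      have hadj := p.adj_getVert_succ hmlt
      have hstep : φ (p.getVert m) i = φ (p.getVert (m+1)) i := by
        by_contra hne
        exact hav m le_rfl hmlt ((hflipθ _ _ hadj i).mp hne)
      rw [hstep]
      exact ih x y p i (m+1) (by omega) (fun j h1 h2 => hav j (by omega) h2)
  -- the central claim: Hamming distance of the embedding equals graph distance
  have main : ∀ (k : ℕ) (x y : V), G.dist x y = k → hammingDist (φ x) (φ y) = k := by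
    intro k
    induction k using Nat.strong_induction_on with
    | _ k ih =>
      rcases k with _ | k
      · intro x y hk
        have hxy : x = y := (hconn.dist_eq_zero_iff).mp hk
        subst hxy
        simp [hammingDist_self]
      · intro x y hk
        obtain ⟨p, hp⟩ := hconn.exists_walk_length_eq_dist x y
        have hp' : p.length = G.dist x y := hp
        have hlen : p.length = k + 1 := by rw [hp, hk]
        have h0 : p.getVert 0 = x := p.getVert_zero
        set z := p.getVert 1 with hz
        have hxz : G.Adj x z := by
          have h := p.adj_getVert_succ (by omega : 0 < p.length)
          rwa [h0] at h
        have hdzy : G.dist z y = k := by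
          have h := dist_getVert hconn p hp' (i := 1) (j := p.length) (by omega) le_rfl
          rw [p.getVert_length] at h
          rw [hz, h, hlen]
          omega
        have ihzy := ih k (by omega) z y hdzy
        set i₀ := eqv (Quotient.mk sd ⟨s(x, z), (SimpleGraph.mem_edgeSet G).mpr hxz⟩) with hi₀
        have hflipx : ∀ i, φ x i ≠ φ z i ↔ i = i₀ :=
          fun i => (hflipθ x z hxz i).trans (hclsθ x z hxz i)
        have hsame : φ z i₀ = φ y i₀ := by
          have h := const_lemma (p.length - 1) x y p i₀ 1 rfl ?_
          · rw [hz]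
            exact h
          · intro j h1 h2 hth
            have hr : theta G ((Quotient.out (eqv.symm i₀)).1) s(x, z) := by
              have hq : Quotient.mk sd (Quotient.out (eqv.symm i₀)) =
                  Quotient.mk sd ⟨s(x, z), (SimpleGraph.mem_edgeSet G).mpr hxz⟩ := by
                rw [Quotient.out_eq, hi₀, Equiv.symm_apply_apply]
              exact Quotient.exact hq
            have hmem1 : s(x, z) ∈ G.edgeSet := (SimpleGraph.mem_edgeSet G).mpr hxz
            have hmem2 : ((Quotient.out (eqv.symm i₀)).1 : Sym2 V) ∈ G.edgeSet :=
              (Quotient.out (eqv.symm i₀)).2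
            have hmem3 : s(p.getVert j, p.getVert (j+1)) ∈ G.edgeSet :=
              (SimpleGraph.mem_edgeSet G).mpr (p.adj_getVert_succ h2)
            have h1' : theta G s(x, z) s(p.getVert j, p.getVert (j+1)) :=
              htrans _ _ _ hmem1 hmem2 hmem3 (theta_symm hr) hth
            have h2' := notheta_path x y p hp' 0 j (by omega) (by omega)
            rw [h0] at h2'
            simp only [zero_add] at h2'
            exact h2' h1'
        have hxy_filter : ({i | φ x i ≠ φ y i} : Finset (Fin n)) =
            insert i₀ ({i | φ z i ≠ φ y i} : Finset (Fin n)) := by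
          ext i
          by_cases hii : i = i₀
          · subst hii
            have hx0 : φ x i₀ ≠ φ z i₀ := (hflipx i₀).mpr rfl
            rw [hsame] at hx0
            simp [hx0]
          · have hxi : φ x i = φ z i := by
              by_contra h
              exact hii ((hflipx i).mp h)
            simp [hxi, hii]
        have hnotmem : i₀ ∉ ({i | φ z i ≠ φ y i} : Finset (Fin n)) := by
          simp [hsame]
        rw [hammingDist, hxy_filter, Finset.card_insert_of_notMem hnotmem]
        rw [hammingDist] at ihzy
        omega
  refine ⟨hconn, n, φ, fun u v => ?_⟩
  rw [cube_dist_eq]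
  exact main (G.dist u v) u v rfl

end PCProof

theorem stmt9 {V : Type*} [Fintype V] (G : SimpleGraph V) (hconn : G.Connected) :
    IsPartialCube G ↔
      (G.Colorable 2 ∧
        ∀ e f g : Sym2 V, e ∈ G.edgeSet → f ∈ G.edgeSet → g ∈ G.edgeSet →
          theta G e f → theta G f g → theta G e g) := by
  constructor
  · exact fun h => PCProof.forward_dir hconn h
  · rintro ⟨hcol, htrans⟩
    exact PCProof.backward_dir hconn hcol htrans
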